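/- Let Z be a symmetric doubly stochastic primitive n×n matrix (so the Markov chain with transition matrix Z has uniform stationary distribution π = e/n). For distinct states a, b, let ρ_ab be the minimum normalized relative cut value between a and b. Then the mean commute time satisfies m_ab + m_ba ≤ 3 n log n / ρ_ab. -/

import Mathlib

open Matrix

noncomputable section

/-- the fundamental matrix `Y = Σ_{k=0}^∞ (T^k − T^∞)` of a doubly stochastic
Markov chain, whose limit matrix `T^∞` has all entries `1/n`. -/
def fundY {n : ℕ} (T : Matrix (Fin n) (Fin n) ℝ) : Matrix (Fin n) (Fin n) ℝ :=
  Matrix.of fun i j => ∑' k : ℕ, ((T ^ k) i j - 1 / n)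

/-- the mean first passage time `m_ij = n (Y_jj − Y_ij)` from state `i` to
state `j` of a doubly stochastic Markov chain with transition matrix `T`. -/
def mfp {n : ℕ} (T : Matrix (Fin n) (Fin n) ℝ) (i j : Fin n) : ℝ :=
  n * (fundY T j j - fundY T i j)

namespace Stmt14Aux

open Finset

variable {n : ℕ}

lemma pow_row_sum (Z : Matrix (Fin n) (Fin n) ℝ) (hrow : ∀ i, ∑ j, Z i j = 1)
    (k : ℕ) (i : Fin n) : ∑ j, (Z ^ k) i j = 1 := by
  induction k generalizing i with
  | zero => simp [Matrix.one_apply]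
  | succ k ih =>
    rw [pow_succ']
    simp only [Matrix.mul_apply]
    rw [Finset.sum_comm]
    simp_rw [← Finset.mul_sum, ih]
    simpa using hrow i

lemma pow_entry_nonneg (Z : Matrix (Fin n) (Fin n) ℝ) (hnonneg : ∀ i j, 0 ≤ Z i j)
    (k : ℕ) (i j : Fin n) : 0 ≤ (Z ^ k) i j := by
  induction k generalizing i j with
  | zero =>
    rw [pow_zero, Matrix.one_apply]
    split <;> norm_num
  | succ k ih =>
    rw [pow_succ, Matrix.mul_apply]
    exact Finset.sum_nonneg fun l _ => mul_nonneg (ih i l) (hnonneg l j)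

lemma fixed_const (W : Matrix (Fin n) (Fin n) ℝ) (hpos : ∀ i j, 0 < W i j)
    (hrow : ∀ i, ∑ j, W i j = 1) (x : Fin n → ℝ) (hfix : W *ᵥ x = x) (i j : Fin n) :
    x i = x j := by
  obtain ⟨i0, -, hmax⟩ := Finset.exists_max_image Finset.univ x ⟨i, Finset.mem_univ i⟩
  have key : ∀ l, x l = x i0 := by
    have h0 : ∑ l, W i0 l * (x i0 - x l) = 0 := by
      have h1 : ∑ l, W i0 l * x l = x i0 := congrFun hfix i0
      have h2 : ∑ l, W i0 l * (x i0 - x l)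
          = (∑ l, W i0 l) * x i0 - ∑ l, W i0 l * x l := by
        rw [Finset.sum_mul, ← Finset.sum_sub_distrib]
        exact Finset.sum_congr rfl fun l _ => by ring
      rw [h2, hrow i0, h1, one_mul, sub_self]
    have h3 := (Finset.sum_eq_zero_iff_of_nonneg (fun l _ =>
      mul_nonneg (hpos i0 l).le (sub_nonneg.2 (hmax l (Finset.mem_univ l))))).1 h0
    intro l
    have := h3 l (Finset.mem_univ l)
    have hW := (hpos i0 l).ne'
    have : x i0 - x l = 0 := by
      rcases mul_eq_zero.1 this with h | h
      · exact absurd h hW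
      · exact h
    linarith
  rw [key i, key j]

lemma abs_eig_lt_one (Z : Matrix (Fin n) (Fin n) ℝ) (hsym : ∀ i j, Z i j = Z j i)
    (hnonneg : ∀ i j, 0 ≤ Z i j) (hrow : ∀ i, ∑ j, Z i j = 1)
    (hprim : ∃ k : ℕ, 0 < k ∧ ∀ a b, 0 < (Z ^ k) a b)
    (lam : ℝ) (x : Fin n → ℝ) (hx : x ≠ 0)
    (horth : ∑ i, x i = 0) (heig : Z *ᵥ x = lam • x) : |lam| < 1 := by
  classical
  have hn0 : 0 < n := by
    rcases Function.ne_iff.1 hx with ⟨i, -⟩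
    exact i.pos
  have hS : 0 < ∑ i, x i ^ 2 := by
    rcases Function.ne_iff.1 hx with ⟨i, hi⟩
    have hine : x i ≠ (0 : ℝ) := hi
    have : (0:ℝ) < x i ^ 2 := by positivity
    exact this.trans_le (Finset.single_le_sum (fun l _ => sq_nonneg (x l)) (Finset.mem_univ i))
  have hcol : ∀ j, ∑ i, Z i j = 1 := by
    intro j
    rw [Finset.sum_congr rfl fun i _ => hsym i j]
    exact hrow j
  -- step 1 : lam ^ 2 ≤ 1
  have hsq : lam ^ 2 ≤ 1 := by
    have hCS : ∀ i, ((Z *ᵥ x) i) ^ 2 ≤ ∑ j, Z i j * x j ^ 2 := by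
      intro i
      have h := Finset.sum_mul_sq_le_sq_mul_sq Finset.univ
        (fun j => Real.sqrt (Z i j)) (fun j => Real.sqrt (Z i j) * x j)
      have h1 : ∀ j, Real.sqrt (Z i j) * (Real.sqrt (Z i j) * x j) = Z i j * x j := by
        intro j
        rw [← mul_assoc, Real.mul_self_sqrt (hnonneg i j)]
      have h2 : ∀ j, Real.sqrt (Z i j) ^ 2 = Z i j := fun j => Real.sq_sqrt (hnonneg i j)
      have h3 : ∀ j, (Real.sqrt (Z i j) * x j) ^ 2 = Z i j * x j ^ 2 := by
        intro j
        rw [mul_pow, h2 j]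
      simp only [h1, h3] at h
      calc ((Z *ᵥ x) i) ^ 2 = (∑ j, Z i j * x j) ^ 2 := by rfl
        _ ≤ (∑ j, Real.sqrt (Z i j) ^ 2) * ∑ j, Z i j * x j ^ 2 := h
        _ = ∑ j, Z i j * x j ^ 2 := by
            simp only [h2]
            rw [hrow i, one_mul]
    have hsum : lam ^ 2 * ∑ i, x i ^ 2 ≤ ∑ i, x i ^ 2 := by
      have hl : ∀ i, ((Z *ᵥ x) i) ^ 2 = lam ^ 2 * x i ^ 2 := by
        intro i
        rw [heig]
        simp [Pi.smul_apply, smul_eq_mul]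
        ring
      calc lam ^ 2 * ∑ i, x i ^ 2 = ∑ i, ((Z *ᵥ x) i) ^ 2 := by
            rw [Finset.mul_sum]
            exact (Finset.sum_congr rfl fun i _ => (hl i)).symm
        _ ≤ ∑ i, ∑ j, Z i j * x j ^ 2 := Finset.sum_le_sum fun i _ => hCS i
        _ = ∑ j, (∑ i, Z i j) * x j ^ 2 := by
            rw [Finset.sum_comm]
            exact Finset.sum_congr rfl fun j _ => by rw [← Finset.sum_mul]
        _ = ∑ j, x j ^ 2 := by
            exact Finset.sum_congr rfl fun j _ => by rw [hcol j, one_mul]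
    exact (mul_le_iff_le_one_left hS).1 hsum
  -- step 2 : exclude lam ^ 2 = 1
  rcases lt_or_eq_of_le hsq with h | h
  · have := abs_nonneg lam
    nlinarith [sq_abs lam]
  · exfalso
    obtain ⟨k, hk, hkpos⟩ := hprim
    have hpow : ∀ m : ℕ, (Z ^ m) *ᵥ x = lam ^ m • x := by
      intro m
      induction m with
      | zero => simp
      | succ m ih =>
        rw [pow_succ', ← Matrix.mulVec_mulVec, ih, Matrix.mulVec_smul, heig,
          pow_succ', smul_smul, mul_comm]
    have hfix : (Z ^ (2 * k)) *ᵥ x = x := by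
      rw [hpow, pow_mul, ← h.symm]
      norm_num
    have hWpos : ∀ i j, 0 < (Z ^ (2 * k)) i j := by
      intro i j
      have h2k : 2 * k = k + k := by ring
      rw [h2k, pow_add, Matrix.mul_apply]
      refine Finset.sum_pos (fun l _ => mul_pos (hkpos i l) (hkpos l j)) ⟨i, Finset.mem_univ i⟩
    have hWrow : ∀ i, ∑ j, (Z ^ (2 * k)) i j = 1 := pow_row_sum Z hrow (2 * k)
    have hconst : ∀ i j, x i = x j := fixed_const (Z ^ (2 * k)) hWpos hWrow x hfix
    rcases Function.ne_iff.1 hx with ⟨i, hi⟩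
    have : ∑ l, x l = n * x i := by
      rw [Finset.sum_congr rfl fun l _ => hconst l i]
      simp [Finset.card_univ]
    rw [horth] at this
    have hxi : x i = 0 := by
      have hn' : (n : ℝ) ≠ 0 := Nat.cast_ne_zero.2 hn0.ne'
      rcases mul_eq_zero.1 this.symm with h' | h'
      · exact absurd h' hn'
      · exact h'
    exact hi hxi

lemma entry_bound (Z : Matrix (Fin n) (Fin n) ℝ) (hsym : ∀ i j, Z i j = Z j i)
    (hnonneg : ∀ i j, 0 ≤ Z i j) (hrow : ∀ i, ∑ j, Z i j = 1)
    (hprim : ∃ k : ℕ, 0 < k ∧ ∀ a b, 0 < (Z ^ k) a b) (hn : 2 ≤ n)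
    (M : Matrix (Fin n) (Fin n) ℝ) (hMdef : M = Z - Matrix.of fun _ _ => (1 : ℝ) / n) :
    ∃ r : ℝ, 0 ≤ r ∧ r < 1 ∧
      ∀ (k : ℕ) (i j : Fin n), |(M ^ k) i j| ≤ r ^ k := by
  classical
  have hn0 : 0 < n := by omega
  have hn0' : (n : ℝ) ≠ 0 := Nat.cast_ne_zero.2 hn0.ne'
  have hcol : ∀ j, ∑ i, Z i j = 1 := by
    intro j
    rw [Finset.sum_congr rfl fun i _ => hsym i j]
    exact hrow j
  have hM : M.IsHermitian := by
    unfold Matrix.IsHermitian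
    ext i j
    simp only [Matrix.conjTranspose_apply, star_trivial, hMdef, Matrix.sub_apply,
      Matrix.of_apply]
    rw [hsym j i]
  set B := hM.eigenvectorBasis with hBdef
  set μ := hM.eigenvalues with hμdef
  have hB : ∀ l, M *ᵥ (fun i => B l i) = μ l • (fun i => B l i) :=
    fun l => hM.mulVec_eigenvectorBasis l
  have horm : ∀ i j : Fin n, ∑ l, B l i * B l j = if i = j then 1 else 0 := by
    intro i j
    have h := B.sum_inner_mul_inner (EuclideanSpace.single i (1:ℝ))
      (EuclideanSpace.single j (1:ℝ))
    simp only [EuclideanSpace.inner_single_left, EuclideanSpace.inner_single_right,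
      starRingEnd_apply, star_trivial, one_mul, mul_one, EuclideanSpace.single_apply] at h
    rw [h]
    simp [eq_comm]
  have hMk : ∀ (k : ℕ) (l : Fin n),
      (M ^ k) *ᵥ (fun i => B l i) = (μ l ^ k) • (fun i => B l i) := by
    intro k l
    induction k with
    | zero => simp
    | succ k ih =>
      rw [pow_succ', ← Matrix.mulVec_mulVec, ih, Matrix.mulVec_smul, hB l,
        pow_succ', smul_smul, mul_comm]
  have hrep : ∀ (k : ℕ) (i j : Fin n),
      (M ^ k) i j = ∑ l, μ l ^ k * (B l i * B l j) := by
    intro k i j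
    have hcoord : ∀ l, ∑ j', (M ^ k) i j' * B l j' = μ l ^ k * B l i := by
      intro l
      have h := congrFun (hMk k l) i
      simpa [Matrix.mulVec, dotProduct] using h
    have h1 : ∑ j', (M ^ k) i j' * (if j' = j then (1:ℝ) else 0) = (M ^ k) i j := by
      simp [mul_ite]
    calc (M ^ k) i j
        = ∑ j', (M ^ k) i j' * (if j' = j then (1:ℝ) else 0) := h1.symm
      _ = ∑ j', (M ^ k) i j' * ∑ l, B l j' * B l j := by
          refine Finset.sum_congr rfl fun j' _ => ?_
          rw [horm j' j]
      _ = ∑ j', ∑ l, (M ^ k) i j' * (B l j' * B l j) := by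
          refine Finset.sum_congr rfl fun j' _ => Finset.mul_sum _ _ _
      _ = ∑ l, ∑ j', (M ^ k) i j' * (B l j' * B l j) := Finset.sum_comm
      _ = ∑ l, μ l ^ k * (B l i * B l j) := by
          refine Finset.sum_congr rfl fun l _ => ?_
          calc ∑ j', (M ^ k) i j' * (B l j' * B l j)
              = (∑ j', (M ^ k) i j' * B l j') * B l j := by
                rw [Finset.sum_mul]
                exact Finset.sum_congr rfl fun j' _ => by ring
            _ = μ l ^ k * B l i * B l j := by rw [hcoord l]
            _ = μ l ^ k * (B l i * B l j) := by ring
  have hmu : ∀ l, |μ l| < 1 := by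
    intro l
    by_cases h0 : μ l = 0
    · rw [h0]
      norm_num
    · set u : Fin n → ℝ := fun i => B l i with hu
      have hune : u ≠ 0 := by
        intro hzz
        exact B.orthonormal.ne_zero l (by ext i; exact congrFun hzz i)
      have hcolM : ∀ j, ∑ i, M i j = 0 := by
        intro j
        simp only [hMdef, Matrix.sub_apply, Matrix.of_apply]
        rw [Finset.sum_sub_distrib, hcol j, Finset.sum_const, Finset.card_univ,
          Fintype.card_fin, nsmul_eq_mul]
        field_simp
        norm_num
      have hsumu : ∑ i, u i = 0 := by
        have h1 : ∑ i, (M *ᵥ u) i = μ l * ∑ i, u i := by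
          rw [hB l]
          simp only [Pi.smul_apply, smul_eq_mul]
          rw [Finset.mul_sum]
        have h2 : ∑ i, (M *ᵥ u) i = 0 := by
          simp only [Matrix.mulVec, dotProduct]
          rw [Finset.sum_comm]
          refine Finset.sum_eq_zero fun j _ => ?_
          rw [← Finset.sum_mul, hcolM j, zero_mul]
        rw [h2] at h1
        exact (mul_eq_zero.1 h1.symm).resolve_left h0
      have hKu : ((Matrix.of fun _ _ => (1:ℝ)/n : Matrix (Fin n) (Fin n) ℝ)) *ᵥ u = 0 := by
        ext i
        simp only [Matrix.mulVec, dotProduct, Matrix.of_apply, Pi.zero_apply]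
        rw [← Finset.mul_sum, hsumu, mul_zero]
      have hZu : Z *ᵥ u = μ l • u := by
        have hsub : M *ᵥ u
            = Z *ᵥ u - ((Matrix.of fun _ _ => (1:ℝ)/n : Matrix (Fin n) (Fin n) ℝ)) *ᵥ u := by
          rw [hMdef, Matrix.sub_mulVec]
        rw [hKu, sub_zero] at hsub
        rw [← hsub]
        exact hB l
      exact abs_eig_lt_one Z hsym hnonneg hrow hprim (μ l) u hune hsumu hZu
  have hne : (Finset.univ : Finset (Fin n)).Nonempty := ⟨⟨0, hn0⟩, Finset.mem_univ _⟩
  refine ⟨Finset.univ.sup' hne fun l => |μ l|, ?_, ?_, ?_⟩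
  · exact le_trans (abs_nonneg (μ ⟨0, hn0⟩))
      (Finset.le_sup' (fun l => |μ l|) (Finset.mem_univ (⟨0, hn0⟩ : Fin n)))
  · exact (Finset.sup'_lt_iff hne).2 fun l _ => hmu l
  · intro k i j
    set r := Finset.univ.sup' hne fun l => |μ l| with hrdef
    have hr0 : 0 ≤ r :=
      le_trans (abs_nonneg (μ ⟨0, hn0⟩))
        (Finset.le_sup' (fun l => |μ l|) (Finset.mem_univ (⟨0, hn0⟩ : Fin n)))
    have hA : ∑ l, |B l i| * |B l j| ≤ 1 := by
      have hsq := Finset.sum_mul_sq_le_sq_mul_sq Finset.univ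
        (fun l => |B l i|) (fun l => |B l j|)
      have hii : ∑ l, |B l i| ^ 2 = 1 := by
        have := horm i i
        rw [if_pos rfl] at this
        rw [← this]
        exact Finset.sum_congr rfl fun l _ => by rw [sq_abs]; ring
      have hjj : ∑ l, |B l j| ^ 2 = 1 := by
        have := horm j j
        rw [if_pos rfl] at this
        rw [← this]
        exact Finset.sum_congr rfl fun l _ => by rw [sq_abs]; ring
      rw [hii, hjj, one_mul] at hsq
      have hAnn : 0 ≤ ∑ l, |B l i| * |B l j| :=
        Finset.sum_nonneg fun l _ => mul_nonneg (abs_nonneg _) (abs_nonneg _)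
      nlinarith
    calc |(M ^ k) i j| = |∑ l, μ l ^ k * (B l i * B l j)| := by rw [hrep k i j]
      _ ≤ ∑ l, |μ l ^ k * (B l i * B l j)| := Finset.abs_sum_le_sum_abs _ _
      _ ≤ ∑ l, r ^ k * (|B l i| * |B l j|) := by
          refine Finset.sum_le_sum fun l _ => ?_
          rw [abs_mul, abs_mul, abs_pow]
          exact mul_le_mul_of_nonneg_right
            (pow_le_pow_left₀ (abs_nonneg _)
              (Finset.le_sup' (fun l => |μ l|) (Finset.mem_univ l)) k)
            (mul_nonneg (abs_nonneg _) (abs_nonneg _))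
      _ = r ^ k * ∑ l, |B l i| * |B l j| := by rw [Finset.mul_sum]
      _ ≤ r ^ k * 1 := mul_le_mul_of_nonneg_left hA (pow_nonneg hr0 k)
      _ = r ^ k := mul_one _

lemma sub_const_pow (Z : Matrix (Fin n) (Fin n) ℝ) (hsym : ∀ i j, Z i j = Z j i)
    (hrow : ∀ i, ∑ j, Z i j = 1) (hn : 2 ≤ n)
    (M : Matrix (Fin n) (Fin n) ℝ) (hMdef : M = Z - Matrix.of fun _ _ => (1 : ℝ) / n) (k : ℕ) :
    M ^ (k + 1) = Z ^ (k + 1) - Matrix.of fun _ _ => (1 : ℝ) / n := by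
  set K : Matrix (Fin n) (Fin n) ℝ := Matrix.of fun _ _ => (1 : ℝ) / n with hK
  have hn0 : (n : ℝ) ≠ 0 := Nat.cast_ne_zero.2 (by omega)
  have hcol : ∀ j, ∑ i, Z i j = 1 := by
    intro j
    rw [Finset.sum_congr rfl fun i _ => hsym i j]
    exact hrow j
  have hZK : ∀ m : ℕ, Z ^ m * K = K := by
    intro m
    ext i j
    rw [Matrix.mul_apply]
    simp only [hK, Matrix.of_apply]
    rw [← Finset.sum_mul, pow_row_sum Z hrow m i, one_mul]
  have hKZ : K * Z = K := by
    ext i j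
    rw [Matrix.mul_apply]
    simp only [hK, Matrix.of_apply]
    rw [← Finset.mul_sum, hcol j, mul_one]
  have hKK : K * K = K := by
    ext i j
    rw [Matrix.mul_apply]
    simp only [hK, Matrix.of_apply]
    rw [Finset.sum_const, Finset.card_univ, Fintype.card_fin, nsmul_eq_mul]
    field_simp
  induction k with
  | zero => rw [pow_one, pow_one, hMdef]
  | succ k ih =>
    rw [pow_succ, ih, hMdef, pow_succ]
    rw [Matrix.sub_mul, Matrix.mul_sub, Matrix.mul_sub, ← pow_succ, ← pow_succ,
      hZK (k+1), hKZ, hKK]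
    abel

lemma summable_aux (Z : Matrix (Fin n) (Fin n) ℝ) (hsym : ∀ i j, Z i j = Z j i)
    (hnonneg : ∀ i j, 0 ≤ Z i j) (hrow : ∀ i, ∑ j, Z i j = 1)
    (hprim : ∃ k : ℕ, 0 < k ∧ ∀ a b, 0 < (Z ^ k) a b) (hn : 2 ≤ n) (i j : Fin n) :
    Summable (fun k : ℕ => (Z ^ k) i j - 1 / n) := by
  set M : Matrix (Fin n) (Fin n) ℝ := Z - Matrix.of fun _ _ => (1 : ℝ) / n with hMd
  obtain ⟨r, hr0, hr1, hbd⟩ := entry_bound Z hsym hnonneg hrow hprim hn M hMd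
  have hs1 : Summable (fun k : ℕ => (M ^ k) i j) :=
    Summable.of_norm_bounded (summable_geometric_of_lt_one hr0 hr1) (fun k => by
      simpa [Real.norm_eq_abs] using hbd k i j)
  have h2 : Summable (fun k : ℕ => (Z ^ (k + 1)) i j - 1 / n) := by
    refine ((summable_nat_add_iff 1).2 hs1).congr fun k => ?_
    rw [sub_const_pow Z hsym hrow hn M hMd k]
    simp [Matrix.sub_apply]
  exact (summable_nat_add_iff (f := fun k : ℕ => (Z ^ k) i j - 1 / n) 1).1 h2

lemma key_identity (Z : Matrix (Fin n) (Fin n) ℝ) (hsym : ∀ i j, Z i j = Z j i)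
    (hnonneg : ∀ i j, 0 ≤ Z i j) (hrow : ∀ i, ∑ j, Z i j = 1)
    (hprim : ∃ k : ℕ, 0 < k ∧ ∀ a b, 0 < (Z ^ k) a b) (hn : 2 ≤ n) (i j : Fin n) :
    fundY Z i j - ∑ l, Z i l * fundY Z l j = (if i = j then 1 else 0) - 1 / n := by
  classical
  have hsum : ∀ l j : Fin n, Summable (fun k : ℕ => (Z ^ k) l j - 1 / n) :=
    fun l j => summable_aux Z hsym hnonneg hrow hprim hn l j
  have hfund : ∀ i j : Fin n, fundY Z i j = ∑' k : ℕ, ((Z ^ k) i j - 1 / n) :=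
    fun i j => rfl
  have h1 : ∑ l, Z i l * fundY Z l j = ∑' k : ℕ, ((Z ^ (k + 1)) i j - 1 / n) := by
    calc ∑ l, Z i l * fundY Z l j
        = ∑ l, ∑' k : ℕ, Z i l * ((Z ^ k) l j - 1 / n) := by
          refine Finset.sum_congr rfl fun l _ => ?_
          rw [hfund l j, tsum_mul_left]
      _ = ∑' k : ℕ, ∑ l, Z i l * ((Z ^ k) l j - 1 / n) :=
          (Summable.tsum_finsetSum fun l _ => (hsum l j).mul_left (Z i l)).symm
      _ = ∑' k : ℕ, ((Z ^ (k + 1)) i j - 1 / n) := by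
          refine tsum_congr fun k => ?_
          have hexp : ∑ l, Z i l * ((Z ^ k) l j - 1 / n)
              = (∑ l, Z i l * (Z ^ k) l j) - (∑ l, Z i l) * (1 / n) := by
            rw [Finset.sum_mul, ← Finset.sum_sub_distrib]
            exact Finset.sum_congr rfl fun l _ => by ring
          rw [hexp, hrow i, one_mul, pow_succ', Matrix.mul_apply]
  rw [hfund i j, h1, Summable.tsum_eq_zero_add (hsum i j), add_sub_cancel_right, pow_zero,
    Matrix.one_apply]

lemma cut_identity (Z : Matrix (Fin n) (Fin n) ℝ) (hsym : ∀ i j, Z i j = Z j i)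
    (hrow : ∀ i, ∑ j, Z i j = 1) (v d : Fin n → ℝ)
    (hv : ∀ i, v i - ∑ l, Z i l * v l = d i) (S : Finset (Fin n)) :
    ∑ i ∈ S, ∑ j ∈ Sᶜ, Z i j * (v i - v j) = ∑ i ∈ S, d i := by
  classical
  have hSS : ∑ i ∈ S, ∑ j ∈ S, Z i j * (v i - v j) = 0 := by
    have h1 : ∑ i ∈ S, ∑ j ∈ S, Z i j * (v i - v j)
        = ∑ j ∈ S, ∑ i ∈ S, Z i j * (v i - v j) := Finset.sum_comm
    have h2 : ∑ j ∈ S, ∑ i ∈ S, Z i j * (v i - v j)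
        = -∑ i ∈ S, ∑ j ∈ S, Z i j * (v i - v j) := by
      rw [← Finset.sum_neg_distrib]
      refine Finset.sum_congr rfl fun j _ => ?_
      rw [← Finset.sum_neg_distrib]
      refine Finset.sum_congr rfl fun i _ => ?_
      rw [hsym i j]; ring
    linarith [h1.trans h2]
  have huniv : ∀ i, ∑ j, Z i j * (v i - v j) = d i := by
    intro i
    have h2 : ∑ j, Z i j * (v i - v j) = (∑ j, Z i j) * v i - ∑ j, Z i j * v j := by
      rw [Finset.sum_mul, ← Finset.sum_sub_distrib]
      exact Finset.sum_congr rfl fun l _ => by ring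
    rw [h2, hrow i, one_mul]
    exact hv i
  have hsplit : ∀ i, ∑ j ∈ S, Z i j * (v i - v j) + ∑ j ∈ Sᶜ, Z i j * (v i - v j)
      = ∑ j, Z i j * (v i - v j) := fun i => Finset.sum_add_sum_compl S _
  calc ∑ i ∈ S, ∑ j ∈ Sᶜ, Z i j * (v i - v j)
      = ∑ i ∈ S, (∑ j, Z i j * (v i - v j)) - ∑ i ∈ S, ∑ j ∈ S, Z i j * (v i - v j) := by
        rw [← Finset.sum_sub_distrib]
        exact Finset.sum_congr rfl fun i _ => by rw [← hsplit i]; ring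
    _ = ∑ i ∈ S, d i := by
        rw [hSS, sub_zero]
        exact Finset.sum_congr rfl fun i _ => huniv i

lemma harmonic_le (m : ℕ) :
    ∑ k ∈ Finset.range m, (1 : ℝ) / (k + 1) ≤ 3 / 2 * Real.log (m + 1) := by
  induction m with
  | zero => simp
  | succ m ih =>
    rw [Finset.sum_range_succ]
    have hgoal : Real.log ((m : ℝ) + 1 + 1) = Real.log ((m : ℝ) + 2) := by
      rw [show ((m : ℝ) + 1 + 1) = (m : ℝ) + 2 by ring]
    rcases Nat.eq_zero_or_pos m with rfl | hm
    · have h2 := Real.log_two_gt_d9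
      simp only [Finset.range_zero, Finset.sum_empty, zero_add]
      norm_num
      nlinarith [h2]
    · have hm1 : (1 : ℝ) ≤ (m : ℝ) := by exact_mod_cast hm
      have hlogd : Real.log ((m : ℝ) + 2) - Real.log ((m : ℝ) + 1) ≥ 1 / ((m : ℝ) + 2) := by
        have hx : (0 : ℝ) < ((m : ℝ) + 1) / ((m : ℝ) + 2) := by positivity
        have hlog := Real.log_le_sub_one_of_pos hx
        rw [Real.log_div (by positivity) (by positivity)] at hlog
        have hq : ((m : ℝ) + 1) / ((m : ℝ) + 2) - 1 = -(1 / ((m : ℝ) + 2)) := by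
          field_simp
          norm_num
        rw [hq] at hlog
        linarith
      have h2 : (1 : ℝ) / ((m : ℝ) + 1) ≤ 3 / 2 * (1 / ((m : ℝ) + 2)) := by
        rw [mul_one_div, div_le_div_iff₀ (by positivity) (by positivity)]
        nlinarith
      push_cast
      push_cast at ih
      rw [show ((m : ℝ) + 1 + 1) = ((m : ℝ) + 2) by ring]
      nlinarith [hlogd, h2, ih]

lemma cut_sum_pos (Z : Matrix (Fin n) (Fin n) ℝ) (hnonneg : ∀ i j, 0 ≤ Z i j)
    (hprim : ∃ k : ℕ, 0 < k ∧ ∀ a b, 0 < (Z ^ k) a b)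
    {a b : Fin n} (S : Finset (Fin n)) (haS : a ∈ S) (hbS : b ∉ S) :
    0 < ∑ i ∈ S, ∑ j ∈ Sᶜ, Z i j := by
  classical
  by_contra hc
  push_neg at hc
  have hnn : ∀ i ∈ S, ∀ j ∈ Sᶜ, 0 ≤ Z i j := fun i _ j _ => hnonneg i j
  have hz : ∀ i ∈ S, ∀ j ∈ Sᶜ, Z i j = 0 := by
    have h0 : ∑ i ∈ S, ∑ j ∈ Sᶜ, Z i j = 0 :=
      le_antisymm hc (Finset.sum_nonneg fun i _ => Finset.sum_nonneg fun j _ => hnonneg i j)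
    intro i hi j hj
    have h1 := (Finset.sum_eq_zero_iff_of_nonneg
      (fun i _ => Finset.sum_nonneg fun j _ => hnonneg i j)).1 h0 i hi
    exact (Finset.sum_eq_zero_iff_of_nonneg (fun j _ => hnonneg i j)).1 h1 j hj
  have hpow : ∀ m : ℕ, 0 < m → ∀ i ∈ S, ∀ j ∈ Sᶜ, (Z ^ m) i j = 0 := by
    intro m
    induction m with
    | zero => intro h; exact absurd h (lt_irrefl 0)
    | succ m ih =>
      intro _ i hi j hj
      rcases Nat.eq_zero_or_pos m with rfl | hm
      · simpa using hz i hi j hj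
      · rw [pow_succ, Matrix.mul_apply]
        refine Finset.sum_eq_zero fun l _ => ?_
        by_cases hl : l ∈ S
        · rw [hz l hl j hj, mul_zero]
        · rw [ih hm i hi l (Finset.mem_compl.2 hl), zero_mul]
  obtain ⟨k, hk, hkpos⟩ := hprim
  have := hpow k hk a haS b (Finset.mem_compl.2 hbS)
  exact (hkpos a b).ne' this

end Stmt14Aux

/-- Theorem 11: for a Markov chain with symmetric doubly stochastic primitive
transition matrix `Z` (uniform stationary distribution), the mean commute time
between distinct states `a` and `b` satisfies `m_ab + m_ba ≤ 3 n log n / ρ_ab`,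
where `ρ_ab` is the minimum normalized relative cut value between `a` and `b`. -/
theorem stmt_14 {n : ℕ}
    (Z : Matrix (Fin n) (Fin n) ℝ)
    (hsym : ∀ i j, Z i j = Z j i)
    (hnonneg : ∀ i j, 0 ≤ Z i j)
    (hrow : ∀ i, ∑ j, Z i j = 1)
    (hprim : ∃ k : ℕ, 0 < k ∧ ∀ a b, 0 < (Z ^ k) a b)
    (a b : Fin n) (hab : a ≠ b)
    -- ρ_ab : the minimum normalized relative cut value between a and b
    (ρab : ℝ)
    (hρab : IsLeast {r : ℝ | ∃ S : Finset (Fin n), a ∈ S ∧ b ∉ S ∧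
      r = (∑ i ∈ S, ∑ j ∈ Sᶜ, (1 / (n : ℝ)) * Z i j) /
        (((S.card : ℝ) / n) * ((Sᶜ.card : ℝ) / n))} ρab) :
    mfp Z a b + mfp Z b a ≤ 3 * n * Real.log n / ρab := by
  classical
  have hn2 : 2 ≤ n := by
    have hnt : Nontrivial (Fin n) := ⟨a, b, hab⟩
    have := Fintype.one_lt_card (α := Fin n)
    exact (by simpa using this : 1 < n)
  have hn0 : 0 < n := by omega
  have hnR : (0:ℝ) < n := by exact_mod_cast hn0
  have hlogn : 0 ≤ Real.log n := Real.log_nonneg (by exact_mod_cast hn0)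
  obtain ⟨⟨S0, haS0, hbS0, hρeq⟩, hlb⟩ := hρab
  have hρpos : 0 < ρab := by
    rw [hρeq]
    apply div_pos
    · have hc := Stmt14Aux.cut_sum_pos Z hnonneg hprim S0 haS0 hbS0
      have hfac : ∑ i ∈ S0, ∑ j ∈ S0ᶜ, (1/(n:ℝ)) * Z i j
          = (1/(n:ℝ)) * ∑ i ∈ S0, ∑ j ∈ S0ᶜ, Z i j := by
        rw [Finset.mul_sum]
        exact Finset.sum_congr rfl fun i _ => (Finset.mul_sum _ _ _).symm
      rw [hfac]
      exact mul_pos (by positivity) hc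
    · have h1 : 0 < S0.card := Finset.card_pos.2 ⟨a, haS0⟩
      have h2 : 0 < S0ᶜ.card := Finset.card_pos.2 ⟨b, Finset.mem_compl.2 hbS0⟩
      have h1' : (0:ℝ) < S0.card := by exact_mod_cast h1
      have h2' : (0:ℝ) < (S0ᶜ.card : ℝ) := by exact_mod_cast h2
      exact mul_pos (div_pos h1' hnR) (div_pos h2' hnR)
  set v : Fin n → ℝ := fun i => fundY Z i a - fundY Z i b with hv
  set d : Fin n → ℝ := fun i => (if i = a then (1:ℝ) else 0) - (if i = b then 1 else 0)
    with hd
  have hkey : ∀ i, v i - ∑ l, Z i l * v l = d i := by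
    intro i
    have ha' := Stmt14Aux.key_identity Z hsym hnonneg hrow hprim hn2 i a
    have hb' := Stmt14Aux.key_identity Z hsym hnonneg hrow hprim hn2 i b
    have hsplit : ∑ l, Z i l * v l
        = ∑ l, Z i l * fundY Z l a - ∑ l, Z i l * fundY Z l b := by
      rw [← Finset.sum_sub_distrib]
      refine Finset.sum_congr rfl fun l _ => ?_
      simp only [hv]
      ring
    rw [hsplit]; simp only [hv, hd]
    linear_combination ha' - hb'
  have hmfp : mfp Z a b + mfp Z b a = n * (v a - v b) := by
    simp only [mfp, hv]
    ring
  by_cases hc : v a ≤ v b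
  · rw [hmfp]
    have hRHS : 0 ≤ 3 * n * Real.log n / ρab := by positivity
    have h1 : v a - v b ≤ 0 := by linarith
    have h2 : (n:ℝ) * (v a - v b) ≤ (n:ℝ) * 0 := mul_le_mul_of_nonneg_left h1 hnR.le
    rw [mul_zero] at h2
    exact h2.trans hRHS
  · push_neg at hc
    set σ := Tuple.sort v with hσ
    have hmon : Monotone (v ∘ σ) := Tuple.monotone_sort v
    set p := σ.symm a with hp
    set q := σ.symm b with hq
    have hvp : v (σ p) = v a := by rw [hp, Equiv.apply_symm_apply]
    have hvq : v (σ q) = v b := by rw [hq, Equiv.apply_symm_apply]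
    have hqp : (q : ℕ) < (p : ℕ) := by
      by_contra h
      push_neg at h
      have hle : p ≤ q := h
      have h2 := hmon hle
      simp only [Function.comp_apply] at h2
      rw [hvp, hvq] at h2
      linarith
    set W : ℕ → ℝ := fun k => if h : k < n then v (σ ⟨k, h⟩) else 0 with hW
    have hWp : W (p : ℕ) = v a := by
      rw [hW]
      simp only [Fin.is_lt, dif_pos, Fin.eta]
      exact hvp
    have hWq : W (q : ℕ) = v b := by
      rw [hW]
      simp only [Fin.is_lt, dif_pos, Fin.eta]
      exact hvq
    have htel : ∑ k ∈ Finset.Ico (q : ℕ) (p : ℕ), (W (k+1) - W k) = v a - v b := by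
      rw [Finset.sum_Ico_eq_sub _ hqp.le, Finset.sum_range_sub W, Finset.sum_range_sub W,
        hWp, hWq]
      ring
    have hgap : ∀ k, (q : ℕ) ≤ k → k < (p : ℕ) →
        W (k+1) - W k ≤ (n : ℝ) / (ρab * ((k+1 : ℕ) : ℝ) * ((n - (k+1) : ℕ) : ℝ)) := by
      intro k hqk hkp
      have hk1n : k + 1 < n := lt_of_le_of_lt (Nat.succ_le_of_lt hkp) p.isLt
      have hkn : k < n := by omega
      set S : Finset (Fin n) := Finset.univ.filter (fun i => k < (σ.symm i : ℕ)) with hS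
      have haS : a ∈ S := by
        simp only [hS, Finset.mem_filter, Finset.mem_univ, true_and]
        rw [← hp]
        exact hkp
      have hbS : b ∉ S := by
        simp only [hS, Finset.mem_filter, Finset.mem_univ, true_and]
        rw [← hq]
        omega
      have hcardS : S.card = n - (k+1) := by
        have hbij : S.card = (Finset.univ.filter (fun j : Fin n => k < (j : ℕ))).card := by
          apply Finset.card_bij' (fun i _ => σ.symm i) (fun j _ => σ j)
          · intro i hi
            simp only [hS, Finset.mem_filter, Finset.mem_univ, true_and] at hi ⊢
            exact hi
          · intro j hj
            simp only [hS, Finset.mem_filter, Finset.mem_univ, true_and] at hj ⊢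
            rw [Equiv.symm_apply_apply]
            exact hj
          · intro i _
            exact Equiv.apply_symm_apply σ i
          · intro j _
            exact Equiv.symm_apply_apply σ j
        rw [hbij]
        have hIoi : Finset.univ.filter (fun j : Fin n => k < (j : ℕ))
            = Finset.Ioi (⟨k, hkn⟩ : Fin n) := by
          ext j
          simp [Finset.mem_Ioi, Fin.lt_def]
        rw [hIoi, Fin.card_Ioi]
        show n - 1 - k = n - (k + 1)
        omega
      have hcardSc : Sᶜ.card = k + 1 := by
        rw [Finset.card_compl, hcardS]
        simp only [Fintype.card_fin]
        omega
      have hcut := Stmt14Aux.cut_identity Z hsym hrow v d hkey S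
      have hdsum : ∑ i ∈ S, d i = 1 := by
        simp only [hd]
        rw [Finset.sum_sub_distrib]
        rw [Finset.sum_ite_eq' S a (fun _ => (1:ℝ)), Finset.sum_ite_eq' S b (fun _ => (1:ℝ))]
        rw [if_pos haS, if_neg hbS]
        ring
      have hvi : ∀ i ∈ S, W (k+1) ≤ v i := by
        intro i hi
        simp only [hS, Finset.mem_filter, Finset.mem_univ, true_and] at hi
        have hle : (⟨k+1, hk1n⟩ : Fin n) ≤ σ.symm i := by
          rw [Fin.le_def]
          exact hi
        have h2 := hmon hle
        simp only [Function.comp_apply, Equiv.apply_symm_apply] at h2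
        rw [hW]
        simp only [dif_pos hk1n]
        exact h2
      have hvj : ∀ j ∈ Sᶜ, v j ≤ W k := by
        intro j hj
        simp only [hS, Finset.mem_compl, Finset.mem_filter, Finset.mem_univ, true_and,
          not_lt] at hj
        have hle : σ.symm j ≤ (⟨k, hkn⟩ : Fin n) := by
          rw [Fin.le_def]
          exact hj
        have h2 := hmon hle
        simp only [Function.comp_apply, Equiv.apply_symm_apply] at h2
        rw [hW]
        simp only [dif_pos hkn]
        exact h2
      set c : ℝ := ∑ i ∈ S, ∑ j ∈ Sᶜ, Z i j with hcdef
      have hc1 : (W (k+1) - W k) * c ≤ 1 := by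
        have hstep : (W (k+1) - W k) * c ≤ ∑ i ∈ S, ∑ j ∈ Sᶜ, Z i j * (v i - v j) := by
          rw [hcdef, Finset.mul_sum]
          refine Finset.sum_le_sum fun i hi => ?_
          rw [Finset.mul_sum]
          refine Finset.sum_le_sum fun j hj => ?_
          rw [mul_comm]
          exact mul_le_mul_of_nonneg_left (by linarith [hvi i hi, hvj j hj]) (hnonneg i j)
        rw [hcut, hdsum] at hstep
        exact hstep
      have hclb : ρab * ((k+1 : ℕ) : ℝ) * ((n - (k+1) : ℕ) : ℝ) / n ≤ c := by
        have hρle := hlb ⟨S, haS, hbS, rfl⟩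
        have hfac : ∑ i ∈ S, ∑ j ∈ Sᶜ, (1/(n:ℝ)) * Z i j = (1/(n:ℝ)) * c := by
          rw [hcdef, Finset.mul_sum]
          exact Finset.sum_congr rfl fun i _ => (Finset.mul_sum _ _ _).symm
        rw [hfac, hcardS, hcardSc] at hρle
        have hx : (0:ℝ) < ((n - (k+1) : ℕ) : ℝ) := by
          have : 0 < n - (k+1) := by omega
          exact_mod_cast this
        have hy : (0:ℝ) < ((k+1 : ℕ) : ℝ) := by positivity
        have hD : (0:ℝ) < (((n - (k+1) : ℕ) : ℝ) / n) * (((k+1 : ℕ) : ℝ) / n) := by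
          exact mul_pos (div_pos hx hnR) (div_pos hy hnR)
        rw [le_div_iff₀ hD] at hρle
        rw [div_le_iff₀ hnR]
        calc ρab * ((k+1 : ℕ) : ℝ) * ((n - (k+1) : ℕ) : ℝ)
            = (ρab * ((((n - (k+1) : ℕ) : ℝ)) / n * (((k+1 : ℕ) : ℝ) / n))) * n * n := by
              field_simp
          _ ≤ ((1/(n:ℝ)) * c) * n * n := by
              have hnn : (0:ℝ) ≤ n := hnR.le
              apply mul_le_mul_of_nonneg_right (mul_le_mul_of_nonneg_right hρle hnn) hnn
          _ = c * n := by
              field_simp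
      have hApos : (0:ℝ) < ρab * ((k+1 : ℕ) : ℝ) * ((n - (k+1) : ℕ) : ℝ) := by
        have hx : (0:ℝ) < ((n - (k+1) : ℕ) : ℝ) := by
          have : 0 < n - (k+1) := by omega
          exact_mod_cast this
        have hy : (0:ℝ) < ((k+1 : ℕ) : ℝ) := by positivity
        exact mul_pos (mul_pos hρpos hy) hx
      by_cases hg0 : W (k+1) - W k ≤ 0
      · exact le_trans hg0 (le_of_lt (div_pos hnR hApos))
      · push_neg at hg0
        rw [le_div_iff₀ hApos]
        calc (W (k+1) - W k) * (ρab * ((k+1 : ℕ) : ℝ) * ((n - (k+1) : ℕ) : ℝ))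
            = ((ρab * ((k+1 : ℕ) : ℝ) * ((n - (k+1) : ℕ) : ℝ)) / n) * (W (k+1) - W k) * n := by
              field_simp
          _ ≤ c * (W (k+1) - W k) * n := by
              apply mul_le_mul_of_nonneg_right _ hnR.le
              exact mul_le_mul_of_nonneg_right hclb hg0.le
          _ = ((W (k+1) - W k) * c) * n := by ring
          _ ≤ 1 * n := mul_le_mul_of_nonneg_right hc1 hnR.le
          _ = n := one_mul _
    set m := n - 1 with hm
    have hmn : m + 1 = n := by omega
    have hsum1 : v a - v b ≤ ∑ k ∈ Finset.range m,
        (n : ℝ) / (ρab * ((k+1 : ℕ) : ℝ) * ((n - (k+1) : ℕ) : ℝ)) := by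
      rw [← htel]
      refine le_trans (Finset.sum_le_sum fun k hk =>
        hgap k (Finset.mem_Ico.1 hk).1 (Finset.mem_Ico.1 hk).2) ?_
      refine Finset.sum_le_sum_of_subset_of_nonneg ?_ ?_
      · intro k hk
        rw [Finset.mem_Ico] at hk
        rw [Finset.mem_range]
        have := p.isLt
        omega
      · intro k _ _
        apply div_nonneg hnR.le
        exact mul_nonneg (mul_nonneg hρpos.le (Nat.cast_nonneg _)) (Nat.cast_nonneg _)
    have hsum2 : ∑ k ∈ Finset.range m, (n : ℝ) / (ρab * ((k+1 : ℕ) : ℝ) * ((n - (k+1) : ℕ) : ℝ))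
        = (1/ρab) * ((∑ k ∈ Finset.range m, (1:ℝ)/((k:ℝ)+1))
          + ∑ k ∈ Finset.range m, (1:ℝ)/(((n - (k+1) : ℕ)) : ℝ)) := by
      rw [← Finset.sum_add_distrib, Finset.mul_sum]
      refine Finset.sum_congr rfl fun k hk => ?_
      rw [Finset.mem_range] at hk
      have hx : (0:ℝ) < ((n - (k+1) : ℕ) : ℝ) := by
        have : 0 < n - (k+1) := by omega
        exact_mod_cast this
      have hy : (0:ℝ) < ((k+1 : ℕ) : ℝ) := by positivity
      have hxy : ((k+1 : ℕ) : ℝ) + ((n - (k+1) : ℕ) : ℝ) = (n : ℝ) := by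
        have h' : (k+1) + (n - (k+1)) = n := by omega
        exact_mod_cast h'
      have hk1 : ((k:ℝ)+1) = ((k+1 : ℕ) : ℝ) := by push_cast; ring
      rw [hk1]
      rw [eq_comm]
      calc (1/ρab) * (1/((k+1 : ℕ) : ℝ) + 1/(((n - (k+1) : ℕ)) : ℝ))
          = (1/ρab) * ((((k+1 : ℕ) : ℝ) + ((n - (k+1) : ℕ) : ℝ))
              / (((k+1 : ℕ) : ℝ) * ((n - (k+1) : ℕ) : ℝ))) := by
            rw [div_add_div _ _ hy.ne' hx.ne', one_mul, mul_one, add_comm]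
        _ = (n : ℝ) / (ρab * ((k+1 : ℕ) : ℝ) * ((n - (k+1) : ℕ) : ℝ)) := by
            rw [hxy, div_mul_div_comm, one_mul, ← mul_assoc]
    have hrefl : ∑ k ∈ Finset.range m, (1:ℝ)/(((n - (k+1) : ℕ)) : ℝ)
        = ∑ k ∈ Finset.range m, (1:ℝ)/((k:ℝ)+1) := by
      rw [← Finset.sum_range_reflect (fun j => (1:ℝ)/((j:ℝ)+1)) m]
      refine Finset.sum_congr rfl fun k hk => ?_
      rw [Finset.mem_range] at hk
      have h1 : n - (k+1) = (m - 1 - k) + 1 := by omega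
      rw [h1, Nat.cast_add, Nat.cast_one]
    have hfin : v a - v b ≤ 3 * Real.log n / ρab := by
      have h3 := Stmt14Aux.harmonic_le m
      have hcast : ((m:ℝ) + 1) = (n:ℝ) := by exact_mod_cast hmn
      rw [hcast] at h3
      calc v a - v b
          ≤ ∑ k ∈ Finset.range m,
            (n : ℝ) / (ρab * ((k+1 : ℕ) : ℝ) * ((n - (k+1) : ℕ) : ℝ)) := hsum1
        _ = (1/ρab) * ((∑ k ∈ Finset.range m, (1:ℝ)/((k:ℝ)+1))
            + ∑ k ∈ Finset.range m, (1:ℝ)/(((n - (k+1) : ℕ)) : ℝ)) := hsum2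
        _ = (1/ρab) * (2 * ∑ k ∈ Finset.range m, (1:ℝ)/((k:ℝ)+1)) := by
            rw [hrefl]
            ring
        _ ≤ (1/ρab) * (2 * (3/2 * Real.log n)) := by
            apply mul_le_mul_of_nonneg_left _ (by positivity)
            have hH : ∑ k ∈ Finset.range m, (1:ℝ)/((k:ℝ)+1) ≤ 3/2 * Real.log n := by
              calc ∑ k ∈ Finset.range m, (1:ℝ)/((k:ℝ)+1)
                  = ∑ k ∈ Finset.range m, (1:ℝ)/((k:ℕ)+1) := by norm_num
                _ ≤ 3/2 * Real.log n := by
                    have := h3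
                    convert this using 2 <;> norm_num
            linarith
        _ = 3 * Real.log n / ρab := by ring
    rw [hmfp]
    calc (n:ℝ) * (v a - v b) ≤ (n:ℝ) * (3 * Real.log n / ρab) :=
        mul_le_mul_of_nonneg_left hfin hnR.le
      _ = 3 * n * Real.log n / ρab := by ring
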